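/- Let Ω ⊂ ℝ³ be a bounded domain, A, B > 0, χ ≥ 0, and let J be an even measurable kernel with a(x) := ∫_Ω J(x−y) dy ≥ 0 a.e. in Ω, a* := sup_{x∈Ω} ∫_Ω |J(x−y)| dy < ∞, a_* := inf_{x∈Ω} ∫_Ω J(x−y) dy. Let Ψ : ℝ → ℝ be continuous and satisfy Ψ(s) ≥ c₂|s|² − c₁ for all s ∈ ℝ, with c₁ ∈ ℝ and c₂ > (B(a* − a_*) + χ²)/(2A). Then there exist constants η₀ ∈ (0,1/2), γ₀ > 0 and C ≥ 0, depending only on A, B, χ, c₁, c₂, a*, a_* and |Ω|, such that for all φ, σ ∈ L²(Ω) with Ψ(φ) ∈ L¹(Ω): E(φ,σ) ≥ η₀‖σ‖²_{L²(Ω)} + γ₀‖φ‖²_{L²(Ω)} − C. -/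

import Mathlib

open MeasureTheory Set

open ENNReal NNReal

/-- Schur-type bound: if the kernel has row and column `L¹` bounds `astar`, then
`∫ |φ(x)| ∫ |K(x,y) φ(y)| dy dx ≤ astar ∫ φ²`, and the majorant is integrable. -/
lemma schur_aux {α : Type*} [MeasurableSpace α] (μ : Measure α) [SFinite μ]
    (K : α → α → ℝ) (hK : Measurable (Function.uncurry K))
    (φ : α → ℝ) (hφ : Measurable φ) (hφ2 : Integrable (fun x => φ x ^ 2) μ)
    (astar : ℝ) (h0 : 0 ≤ astar)
    (hrow : ∀ᵐ x ∂μ, (∫⁻ y, ENNReal.ofReal |K x y| ∂μ) ≤ ENNReal.ofReal astar)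
    (hcol : ∀ᵐ y ∂μ, (∫⁻ x, ENNReal.ofReal |K x y| ∂μ) ≤ ENNReal.ofReal astar) :
    Integrable (fun x => |φ x| * ∫ y, |K x y * φ y| ∂μ) μ ∧
    (∫ x, |φ x| * ∫ y, |K x y * φ y| ∂μ ∂μ) ≤ astar * ∫ x, φ x ^ 2 ∂μ := by
  set bb : α → ℝ≥0∞ := fun x => ENNReal.ofReal |φ x| with hbbdef
  set jj : α → α → ℝ≥0∞ := fun x y => ENNReal.ofReal |K x y| with hjjdef
  have hbbmeas : Measurable bb := hφ.abs.ennreal_ofReal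
  have hbbne : ∀ x, bb x ≠ ⊤ := fun x => ENNReal.ofReal_ne_top
  have hjjmeas : Measurable (Function.uncurry jj) := hK.abs.ennreal_ofReal
  have hjjmeas' : ∀ x, Measurable (fun y => jj x y) := fun x => hjjmeas.of_uncurry_left
  have hbbsq : ∀ x, bb x * bb x = ENNReal.ofReal (φ x ^ 2) := fun x => by
    rw [← ENNReal.ofReal_mul (abs_nonneg _), abs_mul_abs_self, sq]
  set S : ℝ≥0∞ := ∫⁻ x, ENNReal.ofReal (φ x ^ 2) ∂μ with hSdef
  have hS : S = ENNReal.ofReal (∫ x, φ x ^ 2 ∂μ) :=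
    (ofReal_integral_eq_lintegral_ofReal hφ2
      (Filter.Eventually.of_forall fun x => sq_nonneg _)).symm
  set L : ℝ≥0∞ := ∫⁻ x, bb x * ∫⁻ y, jj x y * bb y ∂μ ∂μ with hLdef
  have two_mul_le : ∀ u v : ℝ≥0∞, 2 * (u * v) ≤ u * u + v * v := by
    intro u v
    rcases eq_or_ne u ⊤ with hu | hu
    · rcases eq_or_ne v 0 with hv | hv
      · simp [hv]
      · subst hu
        rw [ENNReal.top_mul hv]
        simp [ENNReal.top_mul, ENNReal.mul_top]
    rcases eq_or_ne v ⊤ with hv | hv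
    · rcases eq_or_ne u 0 with hu' | hu'
      · simp [hu']
      · subst hv
        rw [ENNReal.mul_top hu']
        simp [ENNReal.mul_top, hu']
    lift u to ℝ≥0 using hu
    lift v to ℝ≥0 using hv
    rw [← ENNReal.coe_mul, ← ENNReal.coe_mul, ← ENNReal.coe_mul, ← ENNReal.coe_ofNat,
      ← ENNReal.coe_mul, ← ENNReal.coe_add, ENNReal.coe_le_coe]
    have : (2 : ℝ) * (u * v) ≤ u * u + v * v := by nlinarith [sq_nonneg ((u : ℝ) - v)]
    exact_mod_cast this
  have hT1 : (∫⁻ x, ∫⁻ y, jj x y * (bb x * bb x) ∂μ ∂μ) ≤ ENNReal.ofReal astar * S := by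
    have heq : ∀ x, (∫⁻ y, jj x y * (bb x * bb x) ∂μ) = (bb x * bb x) * ∫⁻ y, jj x y ∂μ := by
      intro x
      rw [lintegral_mul_const' _ _ (ENNReal.mul_ne_top (hbbne x) (hbbne x)), mul_comm]
    calc (∫⁻ x, ∫⁻ y, jj x y * (bb x * bb x) ∂μ ∂μ)
        = ∫⁻ x, (bb x * bb x) * ∫⁻ y, jj x y ∂μ ∂μ := lintegral_congr heq
      _ ≤ ∫⁻ x, (bb x * bb x) * ENNReal.ofReal astar ∂μ := by
          refine lintegral_mono_ae (hrow.mono fun x hx => ?_)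
          exact mul_le_mul_right hx _
      _ = ENNReal.ofReal astar * S := by
          rw [hSdef, lintegral_mul_const' _ _ ENNReal.ofReal_ne_top, mul_comm]
          congr 1
          exact lintegral_congr hbbsq
  have hT2 : (∫⁻ x, ∫⁻ y, jj x y * (bb y * bb y) ∂μ ∂μ) ≤ ENNReal.ofReal astar * S := by
    have hswap : (∫⁻ x, ∫⁻ y, jj x y * (bb y * bb y) ∂μ ∂μ)
        = ∫⁻ y, ∫⁻ x, jj x y * (bb y * bb y) ∂μ ∂μ := by
      refine lintegral_lintegral_swap ?_
      exact (hjjmeas.mul ((hbbmeas.comp measurable_snd).mul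
        (hbbmeas.comp measurable_snd))).aemeasurable
    rw [hswap]
    have heq : ∀ y, (∫⁻ x, jj x y * (bb y * bb y) ∂μ) = (bb y * bb y) * ∫⁻ x, jj x y ∂μ := by
      intro y
      rw [lintegral_mul_const' _ _ (ENNReal.mul_ne_top (hbbne y) (hbbne y)), mul_comm]
    calc (∫⁻ y, ∫⁻ x, jj x y * (bb y * bb y) ∂μ ∂μ)
        = ∫⁻ y, (bb y * bb y) * ∫⁻ x, jj x y ∂μ ∂μ := lintegral_congr heq
      _ ≤ ∫⁻ y, (bb y * bb y) * ENNReal.ofReal astar ∂μ := by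
          refine lintegral_mono_ae (hcol.mono fun y hy => ?_)
          exact mul_le_mul_right hy _
      _ = ENNReal.ofReal astar * S := by
          rw [hSdef, lintegral_mul_const' _ _ ENNReal.ofReal_ne_top, mul_comm]
          congr 1
          exact lintegral_congr hbbsq
  have hL : L ≤ ENNReal.ofReal astar * S := by
    have h2L : 2 * L ≤ 2 * (ENNReal.ofReal astar * S) := by
      have step1 : 2 * L = ∫⁻ x, ∫⁻ y, jj x y * (2 * (bb x * bb y)) ∂μ ∂μ := by
        rw [hLdef, ← lintegral_const_mul' _ _ (by norm_num : (2 : ℝ≥0∞) ≠ ⊤)]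
        refine lintegral_congr fun x => ?_
        rw [show (2 : ℝ≥0∞) * (bb x * ∫⁻ y, jj x y * bb y ∂μ)
            = (2 * bb x) * ∫⁻ y, jj x y * bb y ∂μ by ring,
          ← lintegral_const_mul' _ _ (ENNReal.mul_ne_top (by norm_num) (hbbne x))]
        exact lintegral_congr fun y => by ring
      have step2 : (∫⁻ x, ∫⁻ y, jj x y * (2 * (bb x * bb y)) ∂μ ∂μ)
          ≤ ∫⁻ x, ∫⁻ y, (jj x y * (bb x * bb x) + jj x y * (bb y * bb y)) ∂μ ∂μ := by
        refine lintegral_mono fun x => lintegral_mono fun y => ?_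
        rw [← mul_add]
        exact mul_le_mul_right (two_mul_le _ _) _
      have step3 : (∫⁻ x, ∫⁻ y, (jj x y * (bb x * bb x) + jj x y * (bb y * bb y)) ∂μ ∂μ)
          = (∫⁻ x, ∫⁻ y, jj x y * (bb x * bb x) ∂μ ∂μ)
            + ∫⁻ x, ∫⁻ y, jj x y * (bb y * bb y) ∂μ ∂μ := by
        have hin : ∀ x, (∫⁻ y, (jj x y * (bb x * bb x) + jj x y * (bb y * bb y)) ∂μ)
            = (∫⁻ y, jj x y * (bb x * bb x) ∂μ) + ∫⁻ y, jj x y * (bb y * bb y) ∂μ := by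
          intro x
          exact lintegral_add_left ((hjjmeas' x).mul_const _) _
        rw [lintegral_congr hin]
        refine lintegral_add_left ?_ _
        exact ((hjjmeas.mul ((hbbmeas.comp measurable_fst).mul
          (hbbmeas.comp measurable_fst))).lintegral_prod_right')
      calc 2 * L = ∫⁻ x, ∫⁻ y, jj x y * (2 * (bb x * bb y)) ∂μ ∂μ := step1
        _ ≤ _ := step2
        _ = _ := step3
        _ ≤ ENNReal.ofReal astar * S + ENNReal.ofReal astar * S := add_le_add hT1 hT2
        _ = 2 * (ENNReal.ofReal astar * S) := (two_mul _).symm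
    exact (ENNReal.mul_le_mul_iff_right (by norm_num) (by norm_num)).1 h2L
  have hinner : ∀ x, ENNReal.ofReal (∫ y, |K x y * φ y| ∂μ) ≤ ∫⁻ y, jj x y * bb y ∂μ := by
    intro x
    by_cases hI : Integrable (fun y => |K x y * φ y|) μ
    · rw [ofReal_integral_eq_lintegral_ofReal hI
        (Filter.Eventually.of_forall fun y => abs_nonneg _)]
      refine lintegral_mono fun y => ?_
      rw [abs_mul, ENNReal.ofReal_mul (abs_nonneg _)]
    · rw [integral_undef hI]; simp
  have hmajle : ∀ x, ENNReal.ofReal (|φ x| * ∫ y, |K x y * φ y| ∂μ)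
      ≤ bb x * ∫⁻ y, jj x y * bb y ∂μ := by
    intro x
    rw [ENNReal.ofReal_mul (abs_nonneg _)]
    exact mul_le_mul_right (hinner x) _
  have hLreal : (∫⁻ x, ENNReal.ofReal (|φ x| * ∫ y, |K x y * φ y| ∂μ) ∂μ) ≤ L :=
    lintegral_mono hmajle
  have hfin : (∫⁻ x, ENNReal.ofReal (|φ x| * ∫ y, |K x y * φ y| ∂μ) ∂μ) < ⊤ :=
    lt_of_le_of_lt (hLreal.trans hL)
      (by rw [hS, ← ENNReal.ofReal_mul h0]; exact ENNReal.ofReal_lt_top)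
  have hKmeas : Measurable (fun x => ∫ y, |K x y * φ y| ∂μ) := by
    have : Measurable (fun p : α × α => |K p.1 p.2 * φ p.2|) :=
      (hK.mul (hφ.comp measurable_snd)).abs
    exact this.stronglyMeasurable.integral_prod_right'.measurable
  have hnn : (0 : α → ℝ) ≤ᵐ[μ] fun x => |φ x| * ∫ y, |K x y * φ y| ∂μ :=
    Filter.Eventually.of_forall fun x =>
      mul_nonneg (abs_nonneg _) (integral_nonneg fun y => abs_nonneg _)
  have hint : Integrable (fun x => |φ x| * ∫ y, |K x y * φ y| ∂μ) μ := by
    refine ⟨(hφ.abs.mul hKmeas).aestronglyMeasurable, ?_⟩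
    exact (hasFiniteIntegral_iff_ofReal hnn).2 hfin
  refine ⟨hint, ?_⟩
  have hSnn : 0 ≤ ∫ x, φ x ^ 2 ∂μ := integral_nonneg fun x => sq_nonneg _
  rw [← ENNReal.ofReal_le_ofReal_iff (mul_nonneg h0 hSnn),
    ofReal_integral_eq_lintegral_ofReal hint hnn]
  calc (∫⁻ x, ENNReal.ofReal (|φ x| * ∫ y, |K x y * φ y| ∂μ) ∂μ)
      ≤ L := hLreal
    _ ≤ ENNReal.ofReal astar * S := hL
    _ = ENNReal.ofReal (astar * ∫ x, φ x ^ 2 ∂μ) := by rw [hS, ← ENNReal.ofReal_mul h0]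

set_option maxHeartbeats 2000000 in
/-- Coercivity of the free energy
`E(φ,σ) = ∫_Ω [AΨ(φ) + (B/2)a|φ|² - (B/2)φ(J⋆φ) + (1/2)|σ|² + χσ(1-φ)] dx`:
there exist `η₀ ∈ (0,1/2)`, `γ₀ > 0`, `C ≥ 0` such that
`E(φ,σ) ≥ η₀‖σ‖²_{L²} + γ₀‖φ‖²_{L²} - C` for all `φ, σ ∈ L²(Ω)` with `Ψ(φ) ∈ L¹(Ω)`. -/
theorem stmt_2
    (Ω : Set (Fin 3 → ℝ)) (hΩopen : IsOpen Ω) (hΩconn : IsConnected Ω)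
    (hΩbdd : Bornology.IsBounded Ω) (hΩmeas : MeasurableSet Ω)
    (A B χ : ℝ) (hA : 0 < A) (hB : 0 < B) (hχ : 0 ≤ χ)
    (J : (Fin 3 → ℝ) → ℝ) (hJmeas : Measurable J) (hJeven : ∀ z, J (-z) = J z)
    (hJint : ∀ x ∈ Ω, IntegrableOn (fun y => J (x - y)) Ω)
    (ha0 : ∀ᵐ x ∂(volume.restrict Ω), 0 ≤ ∫ y in Ω, J (x - y))
    (astar aflat : ℝ)
    (hastar : ∀ x ∈ Ω, (∫ y in Ω, |J (x - y)|) ≤ astar)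
    (haflat : ∀ x ∈ Ω, aflat ≤ ∫ y in Ω, J (x - y))
    (Ψ : ℝ → ℝ) (hΨcont : Continuous Ψ)
    (c₁ c₂ : ℝ) (hΨlb : ∀ s : ℝ, c₂ * |s| ^ 2 - c₁ ≤ Ψ s)
    (hc₂ : (B * (astar - aflat) + χ ^ 2) / (2 * A) < c₂) :
    ∃ η₀ γ₀ C : ℝ, η₀ ∈ Set.Ioo (0 : ℝ) (1 / 2) ∧ 0 < γ₀ ∧ 0 ≤ C ∧
      ∀ φ σ : (Fin 3 → ℝ) → ℝ,
        MemLp φ 2 (volume.restrict Ω) → MemLp σ 2 (volume.restrict Ω) →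
        IntegrableOn (fun x => Ψ (φ x)) Ω →
        η₀ * (∫ x in Ω, (σ x) ^ 2) + γ₀ * (∫ x in Ω, (φ x) ^ 2) - C ≤
          ∫ x in Ω, (A * Ψ (φ x) + B / 2 * (∫ y in Ω, J (x - y)) * (φ x) ^ 2
            - B / 2 * φ x * (∫ y in Ω, J (x - y) * φ y)
            + 1 / 2 * (σ x) ^ 2 + χ * σ x * (1 - φ x)) := by
  classical
  haveI : IsFiniteMeasure (volume.restrict Ω) := ⟨by
    rw [Measure.restrict_apply_univ]; exact hΩbdd.measure_lt_top⟩
  obtain ⟨x₀, hx₀⟩ := hΩconn.nonempty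
  have hastar0 : 0 ≤ astar :=
    le_trans (integral_nonneg fun y => abs_nonneg _) (hastar x₀ hx₀)
  obtain ⟨M, hMdef⟩ : ∃ x : ℝ, x = (volume Ω).toReal := ⟨_, rfl⟩
  have hM0 : 0 ≤ M := hMdef ▸ ENNReal.toReal_nonneg
  obtain ⟨δ, hδdef⟩ : ∃ x : ℝ, x = A * c₂ - (B * (astar - aflat) + χ ^ 2) / 2 := ⟨_, rfl⟩
  have hδ : 0 < δ := by
    have h2A : (0 : ℝ) < 2 * A := by linarith
    have h3 := (div_lt_iff₀ h2A).mp hc₂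
    rw [hδdef]; nlinarith
  obtain ⟨t, htdef⟩ : ∃ x : ℝ, x = min (1 / 8 : ℝ) (δ / (8 * (χ ^ 2 + 1))) := ⟨_, rfl⟩
  have ht0 : 0 < t := htdef ▸ lt_min (by norm_num) (by positivity)
  have ht8 : t ≤ 1 / 8 := htdef ▸ min_le_left _ _
  have ht2 : t * (8 * (χ ^ 2 + 1)) ≤ δ := by
    have h := min_le_right (1 / 8 : ℝ) (δ / (8 * (χ ^ 2 + 1)))
    rw [← htdef] at h
    exact (le_div_iff₀ (by positivity)).mp h
  obtain ⟨ε, hεdef⟩ : ∃ x : ℝ, x = 1 / 2 - 2 * t := ⟨_, rfl⟩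
  have hε : (1 / 4 : ℝ) ≤ ε := by rw [hεdef]; linarith
  have hε0 : (0 : ℝ) < ε := by linarith
  obtain ⟨c₀, hc₀def⟩ : ∃ x : ℝ, x = χ ^ 2 / (4 * t) := ⟨_, rfl⟩
  obtain ⟨cε, hcεdef⟩ : ∃ x : ℝ, x = χ ^ 2 / (4 * ε) := ⟨_, rfl⟩
  have hc₀eq : 4 * t * c₀ = χ ^ 2 := by rw [hc₀def]; field_simp
  have hcεeq : 4 * ε * cε = χ ^ 2 := by rw [hcεdef]; field_simp
  have hc₀0 : 0 ≤ c₀ := by rw [hc₀def]; positivity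
  have hcε0 : 0 ≤ cε := by rw [hcεdef]; positivity
  have hcεle : cε ≤ χ ^ 2 / 2 + δ / 2 := by
    have hkey : 4 * t * (χ ^ 2 + δ) ≤ δ := by nlinarith [sq_nonneg χ, mul_pos ht0 hδ]
    nlinarith [hkey, hcεeq, hε0, hεdef, mul_pos hε0 hδ]
  refine ⟨t, δ / 2, (A * |c₁| + c₀) * M, ⟨ht0, by linarith⟩, by linarith, ?_, ?_⟩
  · have h1 : 0 ≤ A * |c₁| + c₀ := by positivity
    exact mul_nonneg h1 hM0
  intro φ₀ σ₀ hφ₀ hσ₀ hΨφ₀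
  -- measurable representatives
  have hφaem := hφ₀.1.aemeasurable
  have hσaem := hσ₀.1.aemeasurable
  obtain ⟨φ, hφmeas, hφae⟩ : ∃ g, Measurable g ∧ φ₀ =ᵐ[(volume.restrict Ω)] g :=
    ⟨hφaem.mk φ₀, hφaem.measurable_mk, hφaem.ae_eq_mk⟩
  obtain ⟨σ, hσmeas, hσae⟩ : ∃ g, Measurable g ∧ σ₀ =ᵐ[(volume.restrict Ω)] g :=
    ⟨hσaem.mk σ₀, hσaem.measurable_mk, hσaem.ae_eq_mk⟩
  have hφ : MemLp φ 2 (volume.restrict Ω) := hφ₀.ae_eq hφae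
  have hσ : MemLp σ 2 (volume.restrict Ω) := hσ₀.ae_eq hσae
  have hΨφ : Integrable (fun x => Ψ (φ x)) (volume.restrict Ω) :=
    Integrable.congr hΨφ₀ (hφae.mono fun x hx => by simp only [hx])
  have hTeq : ∀ x, (∫ y, J (x - y) * φ₀ y ∂(volume.restrict Ω)) = ∫ y, J (x - y) * φ y ∂(volume.restrict Ω) := fun x =>
    integral_congr_ae (hφae.mono fun y hy => by simp only [hy])
  have hgoalσ : (∫ x, (σ₀ x) ^ 2 ∂(volume.restrict Ω)) = ∫ x, (σ x) ^ 2 ∂(volume.restrict Ω) :=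
    integral_congr_ae (hσae.mono fun x hx => by simp only [hx])
  have hgoalφ : (∫ x, (φ₀ x) ^ 2 ∂(volume.restrict Ω)) = ∫ x, (φ x) ^ 2 ∂(volume.restrict Ω) :=
    integral_congr_ae (hφae.mono fun x hx => by simp only [hx])
  have hgoalE : (∫ x, (A * Ψ (φ₀ x) + B / 2 * (∫ y, J (x - y) ∂(volume.restrict Ω)) * (φ₀ x) ^ 2
      - B / 2 * φ₀ x * (∫ y, J (x - y) * φ₀ y ∂(volume.restrict Ω))
      + 1 / 2 * (σ₀ x) ^ 2 + χ * σ₀ x * (1 - φ₀ x)) ∂(volume.restrict Ω))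
      = ∫ x, (A * Ψ (φ x) + B / 2 * (∫ y, J (x - y) ∂(volume.restrict Ω)) * (φ x) ^ 2
      - B / 2 * φ x * (∫ y, J (x - y) * φ y ∂(volume.restrict Ω))
      + 1 / 2 * (σ x) ^ 2 + χ * σ x * (1 - φ x)) ∂(volume.restrict Ω) := by
    refine integral_congr_ae ?_
    filter_upwards [hφae, hσae] with x h1 h2
    rw [h1, h2, hTeq x]
  rw [hgoalσ, hgoalφ, hgoalE]
  clear hgoalσ hgoalφ hgoalE hTeq hΨφ₀ hφae hσae hφ₀ hσ₀
  -- basic integrability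
  obtain ⟨Sφ, hSφdef⟩ : ∃ x : ℝ, x = ∫ x, φ x ^ 2 ∂(volume.restrict Ω) := ⟨_, rfl⟩
  rw [show (∫ x, (φ x) ^ 2 ∂(volume.restrict Ω)) = Sφ from hSφdef.symm]
  have hSφ0 : 0 ≤ Sφ := hSφdef ▸ integral_nonneg fun x => sq_nonneg _
  have hφ2 : Integrable (fun x => φ x ^ 2) (volume.restrict Ω) := hφ.integrable_sq
  have hσ2 : Integrable (fun x => σ x ^ 2) (volume.restrict Ω) := hσ.integrable_sq
  have hσ1 : Integrable σ (volume.restrict Ω) := hσ.integrable one_le_two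
  have hσφ : Integrable (fun x => σ x * φ x) (volume.restrict Ω) := by
    refine Integrable.mono' ((hσ2.add hφ2).const_mul (1 / 2))
      ((hσmeas.mul hφmeas).aestronglyMeasurable)
      (Filter.Eventually.of_forall fun x => ?_)
    simp only [Pi.add_apply, Real.norm_eq_abs, abs_mul]
    nlinarith [sq_nonneg (|σ x| - |φ x|), sq_abs (σ x), sq_abs (φ x),
      abs_nonneg (σ x), abs_nonneg (φ x)]
  -- the a-term
  have haSM : StronglyMeasurable (fun x => ∫ y, J (x - y) ∂(volume.restrict Ω)) := by
    have h : Measurable (fun p : (Fin 3 → ℝ) × (Fin 3 → ℝ) => J (p.1 - p.2)) :=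
      hJmeas.comp (measurable_fst.sub measurable_snd)
    exact h.stronglyMeasurable.integral_prod_right'
  have hmem : ∀ᵐ x ∂(volume.restrict Ω), x ∈ Ω := ae_restrict_mem hΩmeas
  have ha_bdd : ∀ᵐ x ∂(volume.restrict Ω), ‖∫ y, J (x - y) ∂(volume.restrict Ω)‖ ≤ astar := by
    filter_upwards [hmem] with x hx
    rw [Real.norm_eq_abs]
    calc |∫ y, J (x - y) ∂(volume.restrict Ω)| ≤ ∫ y, |J (x - y)| ∂(volume.restrict Ω) := by
          simpa [Real.norm_eq_abs] using
            norm_integral_le_integral_norm (μ := volume.restrict Ω) (fun y => J (x - y))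
      _ ≤ astar := hastar x hx
  have ha_int : Integrable (fun x => (∫ y, J (x - y) ∂(volume.restrict Ω)) * φ x ^ 2) (volume.restrict Ω) :=
    hφ2.bdd_mul haSM.aestronglyMeasurable ha_bdd
  have ha_lb : aflat * Sφ ≤ ∫ x, (∫ y, J (x - y) ∂(volume.restrict Ω)) * φ x ^ 2 ∂(volume.restrict Ω) := by
    rw [hSφdef, ← integral_const_mul]
    refine integral_mono_ae (hφ2.const_mul aflat) ha_int ?_
    filter_upwards [hmem] with x hx
    exact mul_le_mul_of_nonneg_right (haflat x hx) (sq_nonneg _)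
  -- Schur bound for the convolution term
  have hrow : ∀ᵐ x ∂(volume.restrict Ω), (∫⁻ y, ENNReal.ofReal |J (x - y)| ∂(volume.restrict Ω)) ≤ ENNReal.ofReal astar := by
    filter_upwards [hmem] with x hx
    rw [← ofReal_integral_eq_lintegral_ofReal ((hJint x hx).abs)
      (Filter.Eventually.of_forall fun y => abs_nonneg _)]
    exact ENNReal.ofReal_le_ofReal (hastar x hx)
  have hcol : ∀ᵐ y ∂(volume.restrict Ω), (∫⁻ x, ENNReal.ofReal |J (x - y)| ∂(volume.restrict Ω)) ≤ ENNReal.ofReal astar := by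
    filter_upwards [hmem] with y hy
    have hswap : ∀ x : Fin 3 → ℝ, |J (x - y)| = |J (y - x)| := fun x => by
      rw [show x - y = -(y - x) from (neg_sub y x).symm, hJeven]
    simp_rw [hswap]
    rw [← ofReal_integral_eq_lintegral_ofReal ((hJint y hy).abs)
      (Filter.Eventually.of_forall fun x => abs_nonneg _)]
    exact ENNReal.ofReal_le_ofReal (hastar y hy)
  obtain ⟨hmaj_int, hmaj_le⟩ := schur_aux (volume.restrict Ω) (fun x y => J (x - y))
    (by exact hJmeas.comp (measurable_fst.sub measurable_snd)) φ hφmeas hφ2 astar hastar0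
    hrow hcol
  rw [← hSφdef] at hmaj_le
  -- the convolution term
  have hTSM : StronglyMeasurable (fun x => ∫ y, J (x - y) * φ y ∂(volume.restrict Ω)) := by
    have h : Measurable (fun p : (Fin 3 → ℝ) × (Fin 3 → ℝ) => J (p.1 - p.2) * φ p.2) :=
      (hJmeas.comp (measurable_fst.sub measurable_snd)).mul (hφmeas.comp measurable_snd)
    exact h.stronglyMeasurable.integral_prod_right'
  have hTle : ∀ x, |∫ y, J (x - y) * φ y ∂(volume.restrict Ω)| ≤ ∫ y, |J (x - y) * φ y| ∂(volume.restrict Ω) := fun x => by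
    simpa only [Real.norm_eq_abs] using
      norm_integral_le_integral_norm (μ := volume.restrict Ω) (fun y => J (x - y) * φ y)
  have hconv_int : Integrable (fun x => φ x * ∫ y, J (x - y) * φ y ∂(volume.restrict Ω)) (volume.restrict Ω) := by
    refine Integrable.mono hmaj_int
      ((hφmeas.mul hTSM.measurable).aestronglyMeasurable)
      (Filter.Eventually.of_forall fun x => ?_)
    rw [Real.norm_eq_abs, Real.norm_eq_abs, abs_mul]
    calc |φ x| * |∫ y, J (x - y) * φ y ∂(volume.restrict Ω)|
        ≤ |φ x| * ∫ y, |J (x - y) * φ y| ∂(volume.restrict Ω) :=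
          mul_le_mul_of_nonneg_left (hTle x) (abs_nonneg _)
      _ ≤ |(|φ x| * ∫ y, |J (x - y) * φ y| ∂(volume.restrict Ω))| := le_abs_self _
  have hconv_le : (∫ x, φ x * ∫ y, J (x - y) * φ y ∂(volume.restrict Ω) ∂(volume.restrict Ω)) ≤ astar * Sφ := by
    refine le_trans (integral_mono hconv_int hmaj_int fun x => ?_) hmaj_le
    calc φ x * ∫ y, J (x - y) * φ y ∂(volume.restrict Ω) ≤ |φ x * ∫ y, J (x - y) * φ y ∂(volume.restrict Ω)| := le_abs_self _
      _ = |φ x| * |∫ y, J (x - y) * φ y ∂(volume.restrict Ω)| := abs_mul _ _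
      _ ≤ |φ x| * ∫ y, |J (x - y) * φ y| ∂(volume.restrict Ω) :=
          mul_le_mul_of_nonneg_left (hTle x) (abs_nonneg _)
  -- the pointwise part
  have hp_int : Integrable (fun x => A * Ψ (φ x) + 1 / 2 * σ x ^ 2 + χ * σ x * (1 - φ x)) (volume.restrict Ω) := by
    have h1 : Integrable (fun x => A * Ψ (φ x) + 1 / 2 * σ x ^ 2
        + (χ * σ x - χ * (σ x * φ x))) (volume.restrict Ω) :=
      ((hΨφ.const_mul A).add (hσ2.const_mul (1 / 2))).add
        ((hσ1.const_mul χ).sub (hσφ.const_mul χ))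
    exact h1.congr (Filter.Eventually.of_forall fun x => by ring)
  have hp_lb : t * (∫ x, σ x ^ 2 ∂(volume.restrict Ω)) + (A * c₂ - cε) * Sφ - (A * c₁ + c₀) * M
      ≤ ∫ x, (A * Ψ (φ x) + 1 / 2 * σ x ^ 2 + χ * σ x * (1 - φ x)) ∂(volume.restrict Ω) := by
    have hrhs : Integrable (fun x => t * σ x ^ 2 + (A * c₂ - cε) * φ x ^ 2
        - (A * c₁ + c₀)) (volume.restrict Ω) :=
      ((hσ2.const_mul t).add (hφ2.const_mul _)).sub (integrable_const _)
    have hpt : ∀ x, t * σ x ^ 2 + (A * c₂ - cε) * φ x ^ 2 - (A * c₁ + c₀)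
        ≤ A * Ψ (φ x) + 1 / 2 * σ x ^ 2 + χ * σ x * (1 - φ x) := by
      intro x
      have hΨx : c₂ * φ x ^ 2 - c₁ ≤ Ψ (φ x) := by
        have h := hΨlb (φ x); rwa [sq_abs] at h
      have hAΨ : A * (c₂ * φ x ^ 2 - c₁) ≤ A * Ψ (φ x) :=
        mul_le_mul_of_nonneg_left hΨx hA.le
      have H1 : 0 ≤ t * σ x ^ 2 + χ * σ x + c₀ := by
        nlinarith [sq_nonneg (2 * t * σ x + χ), ht0]
      have H2 : 0 ≤ ε * σ x ^ 2 - χ * (σ x * φ x) + cε * φ x ^ 2 := by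
        nlinarith [sq_nonneg (2 * ε * σ x - χ * φ x), hε0]
      nlinarith [H1, H2, hAΨ, hεdef]
    have hle := integral_mono hrhs hp_int hpt
    have heq : (∫ x, (t * σ x ^ 2 + (A * c₂ - cε) * φ x ^ 2 - (A * c₁ + c₀)) ∂(volume.restrict Ω))
        = t * (∫ x, σ x ^ 2 ∂(volume.restrict Ω)) + (A * c₂ - cε) * Sφ - (A * c₁ + c₀) * M := by
      have hint1 : Integrable (fun x => t * σ x ^ 2 + (A * c₂ - cε) * φ x ^ 2)
          (volume.restrict Ω) := (hσ2.const_mul t).add (hφ2.const_mul _)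
      rw [integral_sub hint1 (integrable_const _),
        integral_add (hσ2.const_mul t) (hφ2.const_mul _),
        integral_const_mul, integral_const_mul, integral_const, smul_eq_mul,
        measureReal_restrict_apply_univ, measureReal_def, ← hMdef, ← hSφdef]
      ring
    exact le_of_eq_of_le heq.symm hle
  -- split the full integral
  have hq_int : Integrable (fun x => B / 2 * ((∫ y, J (x - y) ∂(volume.restrict Ω)) * φ x ^ 2)
      - B / 2 * (φ x * ∫ y, J (x - y) * φ y ∂(volume.restrict Ω))) (volume.restrict Ω) :=
    (ha_int.const_mul _).sub (hconv_int.const_mul _)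
  have hsplit : (∫ x, (A * Ψ (φ x) + B / 2 * (∫ y, J (x - y) ∂(volume.restrict Ω)) * (φ x) ^ 2
      - B / 2 * φ x * (∫ y, J (x - y) * φ y ∂(volume.restrict Ω))
      + 1 / 2 * (σ x) ^ 2 + χ * σ x * (1 - φ x)) ∂(volume.restrict Ω))
      = (∫ x, (A * Ψ (φ x) + 1 / 2 * σ x ^ 2 + χ * σ x * (1 - φ x)) ∂(volume.restrict Ω))
        + (B / 2 * (∫ x, (∫ y, J (x - y) ∂(volume.restrict Ω)) * φ x ^ 2 ∂(volume.restrict Ω))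
          - B / 2 * ∫ x, φ x * ∫ y, J (x - y) * φ y ∂(volume.restrict Ω) ∂(volume.restrict Ω)) := by
    calc (∫ x, (A * Ψ (φ x) + B / 2 * (∫ y, J (x - y) ∂(volume.restrict Ω)) * (φ x) ^ 2
        - B / 2 * φ x * (∫ y, J (x - y) * φ y ∂(volume.restrict Ω))
        + 1 / 2 * (σ x) ^ 2 + χ * σ x * (1 - φ x)) ∂(volume.restrict Ω))
        = ∫ x, ((A * Ψ (φ x) + 1 / 2 * σ x ^ 2 + χ * σ x * (1 - φ x))
            + (B / 2 * ((∫ y, J (x - y) ∂(volume.restrict Ω)) * φ x ^ 2)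
              - B / 2 * (φ x * ∫ y, J (x - y) * φ y ∂(volume.restrict Ω)))) ∂(volume.restrict Ω) :=
          integral_congr_ae (Filter.Eventually.of_forall fun x => by ring)
      _ = (∫ x, (A * Ψ (φ x) + 1 / 2 * σ x ^ 2 + χ * σ x * (1 - φ x)) ∂(volume.restrict Ω))
          + ∫ x, (B / 2 * ((∫ y, J (x - y) ∂(volume.restrict Ω)) * φ x ^ 2)
            - B / 2 * (φ x * ∫ y, J (x - y) * φ y ∂(volume.restrict Ω))) ∂(volume.restrict Ω) :=
          integral_add hp_int hq_int
      _ = _ := by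
          rw [integral_sub (ha_int.const_mul _) (hconv_int.const_mul _),
            integral_const_mul, integral_const_mul]
  rw [hsplit]
  have hB2 : (0 : ℝ) ≤ B / 2 := by linarith
  have hfin1 : B / 2 * (aflat * Sφ) ≤ B / 2 * ∫ x, (∫ y, J (x - y) ∂(volume.restrict Ω)) * φ x ^ 2 ∂(volume.restrict Ω) :=
    mul_le_mul_of_nonneg_left ha_lb hB2
  have hfin2 : B / 2 * (∫ x, φ x * ∫ y, J (x - y) * φ y ∂(volume.restrict Ω) ∂(volume.restrict Ω)) ≤ B / 2 * (astar * Sφ) :=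
    mul_le_mul_of_nonneg_left hconv_le hB2
  have hcoef : δ / 2 * Sφ ≤ (A * c₂ - cε + B / 2 * aflat - B / 2 * astar) * Sφ := by
    refine mul_le_mul_of_nonneg_right ?_ hSφ0
    rw [hδdef] at *
    linarith [hcεle]
  have hC : (A * c₁ + c₀) * M ≤ (A * |c₁| + c₀) * M := by
    refine mul_le_mul_of_nonneg_right ?_ hM0
    nlinarith [le_abs_self c₁, hA.le]
  nlinarith [hp_lb, hfin1, hfin2, hcoef, hC]
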